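/- Let A ∈ ℝ^{n×n}, B_d ∈ ℝ^{n×m}, C ∈ ℝ^{p×n}, D_d ∈ ℝ^{p×m} with D_d D_dᵀ = I, and let Y ⪰ 0 solve the Riccati equation of Lemma 1 with L* = Y Cᵀ + B_d D_dᵀ. Then for any gain L ∈ ℝ^{n×p} such that A − LC is Hurwitz, the controllability Gramian Q_L of (A − LC, B_d − L D_d) satisfies trace(C Q_L Cᵀ) ≥ trace(C Y Cᵀ), with equality when L = L*. -/

import Mathlib

open Matrix

open NormedSpace Filter Topology

attribute [local instance] Matrix.linftyOpNormedRing Matrix.linftyOpNormedAlgebra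


lemma coef_tendsto_real (c : ℝ) (hc : c < 0) (j : ℕ) :
    Tendsto (fun t : ℝ => t ^ j * Real.exp (c * t)) atTop (𝓝 0) := by
  have h1 : Tendsto (fun t : ℝ => -c * t) atTop atTop :=
    Tendsto.const_mul_atTop (by linarith) tendsto_id
  have h2 := (Real.tendsto_pow_mul_exp_neg_atTop_nhds_zero j).comp h1
  have h3 := h2.const_mul ((-c) ^ j)⁻¹
  rw [mul_zero] at h3
  refine h3.congr fun t => ?_
  have hne : ((-c) ^ j : ℝ) ≠ 0 := pow_ne_zero _ (by linarith)
  rw [Function.comp_apply, mul_pow, neg_mul, neg_neg, ← mul_assoc, ← mul_assoc, inv_mul_cancel₀ hne,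
    one_mul]

lemma coef_tendsto (μ : ℂ) (hμ : μ.re < 0) (j : ℕ) :
    Tendsto (fun t : ℝ => Complex.exp ((t : ℂ) * μ) * ((j.factorial : ℂ))⁻¹ * (t : ℂ) ^ j)
      atTop (𝓝 0) := by
  rw [tendsto_zero_iff_norm_tendsto_zero]
  have hb := (coef_tendsto_real μ.re hμ j).const_mul ((j.factorial : ℝ))⁻¹
  rw [mul_zero] at hb
  refine squeeze_zero_norm' ?_ hb
  filter_upwards [eventually_ge_atTop (0:ℝ)] with t ht
  simp only [norm_norm, norm_mul, Complex.norm_exp, norm_inv, map_inv₀, map_pow,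
    Complex.norm_natCast, ← Complex.ofReal_pow, Complex.norm_real, abs_of_nonneg ht]
  have : ((t:ℂ) * μ).re = t * μ.re := by simp
  rw [this, mul_comm t μ.re]
  have h1 : |((j.factorial : ℝ))⁻¹| = ((j.factorial : ℝ))⁻¹ := abs_of_nonneg (by positivity)
  simp only [Real.norm_eq_abs, abs_of_nonneg (Real.exp_pos _).le, h1,
    abs_of_nonneg (pow_nonneg ht _)]
  ring_nf
  exact le_of_eq (by rw [Nat.abs_cast])

lemma exp_mulVec_nilp {n : ℕ} (B : Matrix (Fin n) (Fin n) ℂ) (μ : ℂ) (k : ℕ)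
    (v : Fin n → ℂ) (hv : ((B - μ • 1) ^ k) *ᵥ v = 0) (t : ℝ) :
    exp ((t : ℂ) • B) *ᵥ v = ∑ j ∈ Finset.range k,
      (Complex.exp ((t : ℂ) * μ) * ((j.factorial : ℂ))⁻¹ * (t : ℂ) ^ j) •
        ((B - μ • 1) ^ j *ᵥ v) := by
  classical
  set N : Matrix (Fin n) (Fin n) ℂ := B - μ • 1 with hN
  have hsplit : (t : ℂ) • B = algebraMap ℂ (Matrix (Fin n) (Fin n) ℂ) ((t : ℂ) * μ)
      + (t : ℂ) • N := by
    simp [hN, Algebra.algebraMap_eq_smul_one, smul_sub, smul_smul, mul_comm]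
  have hcomm : Commute (algebraMap ℂ (Matrix (Fin n) (Fin n) ℂ) ((t : ℂ) * μ)) ((t : ℂ) • N) :=
    (Algebra.commutes _ _)
  have hsc : exp (algebraMap ℂ (Matrix (Fin n) (Fin n) ℂ) ((t : ℂ) * μ))
      = algebraMap ℂ (Matrix (Fin n) (Fin n) ℂ) (exp ((t : ℂ) * μ)) :=
    (algebraMap_exp_comm _).symm
  rw [hsplit, Matrix.exp_add_of_commute _ _ hcomm, hsc]
  -- now : (algebraMap (exp (t*μ)) * exp (t•N)) *ᵥ v
  have hexpN : exp ((t : ℂ) • N) *ᵥ v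
      = ∑ j ∈ Finset.range k, (((j.factorial : ℂ))⁻¹ * (t : ℂ) ^ j) • (N ^ j *ᵥ v) := by
    let φ₀ : Matrix (Fin n) (Fin n) ℂ →ₗ[ℂ] (Fin n → ℂ) :=
      { toFun := fun M => M *ᵥ v
        map_add' := fun M M' => Matrix.add_mulVec M M' v
        map_smul' := fun c M => Matrix.smul_mulVec c M v }
    let φ := LinearMap.toContinuousLinearMap φ₀
    have hφ : ∀ M, φ M = M *ᵥ v := fun _ => rfl
    rw [exp_eq_tsum (𝕂 := ℂ), ← hφ, φ.map_tsum (expSeries_summable' (𝕂 := ℂ) ((t:ℂ) • N))]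
    have hterm : ∀ j : ℕ, φ (((j.factorial : ℂ))⁻¹ • ((t:ℂ) • N) ^ j)
        = (((j.factorial : ℂ))⁻¹ * (t : ℂ) ^ j) • (N ^ j *ᵥ v) := by
      intro j
      rw [hφ, smul_pow, ← smul_smul, Matrix.smul_mulVec, Matrix.smul_mulVec]
    simp_rw [hterm]
    refine tsum_eq_sum ?_
    intro j hj
    have hk : k ≤ j := by simpa using hj
    have : N ^ j *ᵥ v = 0 := by
      rw [← Nat.sub_add_cancel hk, pow_add, ← Matrix.mulVec_mulVec, hv, Matrix.mulVec_zero]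
    rw [this, smul_zero]
  rw [← Matrix.mulVec_mulVec, hexpN, Algebra.algebraMap_eq_smul_one]
  rw [Matrix.smul_mulVec, Matrix.one_mulVec, Finset.smul_sum]
  refine Finset.sum_congr rfl fun j _ => ?_
  rw [smul_smul, mul_assoc, Complex.exp_eq_exp_ℂ]

lemma decayC {n : ℕ} (B : Matrix (Fin n) (Fin n) ℂ)
    (hB : ∀ μ ∈ spectrum ℂ B, μ.re < 0) (v : Fin n → ℂ) :
    Tendsto (fun t : ℝ => exp ((t : ℂ) • B) *ᵥ v) atTop (𝓝 0) := by
  classical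
  set S : Submodule ℂ (Fin n → ℂ) :=
    { carrier := { w | Tendsto (fun t : ℝ => exp ((t : ℂ) • B) *ᵥ w) atTop (𝓝 0) }
      add_mem' := fun ha hb => by simpa [Matrix.mulVec_add] using Tendsto.add ha hb
      zero_mem' := by simpa [Matrix.mulVec_zero] using (tendsto_const_nhds :
        Tendsto (fun _ : ℝ => (0 : Fin n → ℂ)) atTop _)
      smul_mem' := fun c a ha => by
        simpa [Matrix.mulVec_smul] using ha.const_smul c } with hS
  set f := (Matrix.toLinAlgEquiv' : Matrix (Fin n) (Fin n) ℂ ≃ₐ[ℂ] _) B with hf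
  have htop : (⊤ : Submodule ℂ (Fin n → ℂ)) ≤ S := by
    rw [← Module.End.iSup_maxGenEigenspace_eq_top f]
    refine iSup_le fun μ => fun w hw => ?_
    obtain ⟨k, hw⟩ := (Module.End.mem_maxGenEigenspace f μ w).1 hw
    rcases eq_or_ne w 0 with rfl | hw0
    · exact S.zero_mem
    have hμ : μ.re < 0 := by
      apply hB
      rw [← AlgEquiv.spectrum_eq ((Matrix.toLinAlgEquiv' : Matrix (Fin n) (Fin n) ℂ ≃ₐ[ℂ] _)) B,
        ← Module.End.hasEigenvalue_iff_mem_spectrum]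
      refine Module.End.hasEigenvalue_of_hasGenEigenvalue (k := k) ?_
      rw [Module.End.hasGenEigenvalue_iff]
      rw [Module.End.genEigenspace_nat]
      exact fun hbot => hw0 (by
        have : w ∈ (⊥ : Submodule ℂ (Fin n → ℂ)) := hbot ▸ LinearMap.mem_ker.mpr hw
        simpa using this)
    have hker : ((B - μ • 1) ^ k) *ᵥ w = 0 := by
      have : (f - μ • 1) ^ k = (Matrix.toLinAlgEquiv' : Matrix (Fin n) (Fin n) ℂ ≃ₐ[ℂ] _) ((B - μ • 1) ^ k) := by
        rw [map_pow, map_sub, _root_.map_smul, _root_.map_one]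
      have h2 := hw
      rw [this, Matrix.toLinAlgEquiv'_apply] at h2
      exact h2
    show Tendsto _ _ _
    have heq : ∀ t : ℝ, exp ((t : ℂ) • B) *ᵥ w = ∑ j ∈ Finset.range k,
        (Complex.exp ((t : ℂ) * μ) * ((j.factorial : ℂ))⁻¹ * (t : ℂ) ^ j) •
          ((B - μ • 1) ^ j *ᵥ w) := fun t => exp_mulVec_nilp B μ k w hker t
    simp only [heq]
    have : Tendsto (fun t : ℝ => ∑ j ∈ Finset.range k,
        (Complex.exp ((t : ℂ) * μ) * ((j.factorial : ℂ))⁻¹ * (t : ℂ) ^ j) •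
          ((B - μ • 1) ^ j *ᵥ w)) atTop (𝓝 (∑ j ∈ Finset.range k, (0 : Fin n → ℂ)))  := by
      refine tendsto_finset_sum _ fun j _ => ?_
      have := (coef_tendsto μ hμ j).smul_const ((B - μ • 1) ^ j *ᵥ w)
      simpa using this
    simpa using this
  exact htop trivial

lemma decayR {n : ℕ} (B : Matrix (Fin n) (Fin n) ℝ)
    (hB : ∀ μ ∈ spectrum ℂ (B.map Complex.ofReal), μ.re < 0) (v : Fin n → ℝ) :
    Tendsto (fun t : ℝ => exp (t • B) *ᵥ v) atTop (𝓝 0) := by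
  classical
  set φ : Matrix (Fin n) (Fin n) ℝ →+* Matrix (Fin n) (Fin n) ℂ :=
    (Complex.ofRealHom.mapMatrix) with hφdef
  have hφcont : Continuous φ := by
    show Continuous fun M : Matrix (Fin n) (Fin n) ℝ => M.map Complex.ofReal
    exact Continuous.matrix_map continuous_id Complex.continuous_ofReal
  have hmapexp : ∀ t : ℝ, (exp (t • B)).map Complex.ofReal
      = exp ((t : ℂ) • B.map Complex.ofReal) := by
    intro t
    have h1 : φ (exp (t • B)) = exp (φ (t • B)) := map_exp φ hφcont (t • B)
    have h2 : φ (t • B) = (t : ℂ) • B.map Complex.ofReal := by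
      ext i j
      simp [hφdef, Matrix.map_apply, Complex.ofReal_mul, Complex.real_smul]
    have h3 : (exp : Matrix (Fin n) (Fin n) ℂ → _) = exp :=
      rfl
    calc (exp (t • B)).map Complex.ofReal = φ (exp (t • B)) := rfl
      _ = exp (φ (t • B)) := h1
      _ = exp ((t : ℂ) • B.map Complex.ofReal) := by rw [h2, h3]
  have hC := decayC (B.map Complex.ofReal) hB (fun j => (v j : ℂ))
  rw [tendsto_pi_nhds]
  intro i
  have hCi : Tendsto (fun t : ℝ =>
      (exp ((t : ℂ) • B.map Complex.ofReal) *ᵥ (fun j => (v j : ℂ))) i) atTop (𝓝 0) := by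
    exact ((continuous_apply i).continuousAt.tendsto.comp hC).congr fun t => rfl
  have hre := (Complex.continuous_re.tendsto 0).comp hCi
  refine hre.congr fun t => ?_
  have : ((exp (t • B) *ᵥ v) i : ℂ)
      = (exp ((t : ℂ) • B.map Complex.ofReal) *ᵥ (fun j => (v j : ℂ))) i := by
    rw [← hmapexp t]
    exact Complex.ofRealHom.map_mulVec (exp (t • B)) v i
  rw [Function.comp_apply, ← this, Complex.ofReal_re]

lemma quad_transpose {n : ℕ} (P W : Matrix (Fin n) (Fin n) ℝ) (x : Fin n → ℝ) :
    x ⬝ᵥ ((Pᵀ * W * P) *ᵥ x) = (P *ᵥ x) ⬝ᵥ (W *ᵥ (P *ᵥ x)) := by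
  rw [mul_assoc, ← Matrix.mulVec_mulVec, Matrix.dotProduct_mulVec, Matrix.vecMul_transpose,
    ← Matrix.mulVec_mulVec]

lemma dotProduct_self_nonneg' {q : ℕ} (x : Fin q → ℝ) : 0 ≤ x ⬝ᵥ x :=
  Finset.sum_nonneg fun i _ => mul_self_nonneg (x i)

lemma spectrum_transpose {n : ℕ} (M : Matrix (Fin n) (Fin n) ℂ) :
    spectrum ℂ Mᵀ = spectrum ℂ M := by
  ext μ
  rw [spectrum.mem_iff, spectrum.mem_iff]
  have : algebraMap ℂ (Matrix (Fin n) (Fin n) ℂ) μ - Mᵀ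
      = (algebraMap ℂ (Matrix (Fin n) (Fin n) ℂ) μ - M)ᵀ := by
    rw [Matrix.transpose_sub]
    congr 1
    rw [Algebra.algebraMap_eq_smul_one, Matrix.transpose_smul, Matrix.transpose_one]
  rw [this]
  exact not_congr (by rw [Matrix.isUnit_iff_isUnit_det, Matrix.det_transpose,
    ← Matrix.isUnit_iff_isUnit_det])

lemma lyap_quad {n q : ℕ} (AL Δ : Matrix (Fin n) (Fin n) ℝ)
    (M : Matrix (Fin n) (Fin q) ℝ)
    (hHur : ∀ μ ∈ spectrum ℂ (AL.map Complex.ofReal), μ.re < 0)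
    (hEq : AL * Δ + Δ * ALᵀ + M * Mᵀ = 0) (v : Fin n → ℝ) :
    0 ≤ v ⬝ᵥ (Δ *ᵥ v) ∧ (M = 0 → v ⬝ᵥ (Δ *ᵥ v) = 0) := by
  classical
  have hALΔ : AL * Δ + Δ * ALᵀ = -(M * Mᵀ) := eq_neg_of_add_eq_zero_left hEq
  set F : ℝ → Matrix (Fin n) (Fin n) ℝ := fun t => exp (t • AL) with hF
  set H : ℝ → Matrix (Fin n) (Fin n) ℝ := fun t => exp (t • ALᵀ) with hH
  have hFT : ∀ t, F t = (H t)ᵀ := by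
    intro t
    rw [hF, hH]
    rw [← Matrix.exp_transpose, Matrix.transpose_smul, Matrix.transpose_transpose]
  -- the linear functional X ↦ v ⬝ᵥ X *ᵥ v
  set ℓ₀ : Matrix (Fin n) (Fin n) ℝ →ₗ[ℝ] ℝ :=
    { toFun := fun X => v ⬝ᵥ (X *ᵥ v)
      map_add' := fun X X' => by simp [Matrix.add_mulVec, dotProduct_add]
      map_smul' := fun c X => by simp [Matrix.smul_mulVec, dotProduct_smul] } with hl0
  set ℓ := LinearMap.toContinuousLinearMap ℓ₀ with hl
  have hℓ : ∀ X, ℓ X = v ⬝ᵥ (X *ᵥ v) := fun _ => rfl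
  set g : ℝ → ℝ := fun t => ℓ (F t * Δ * H t) with hg
  have hderivG : ∀ t, HasDerivAt (fun s => F s * Δ * H s)
      (F t * (-(M * Mᵀ)) * H t) t := by
    intro t
    have hF' : HasDerivAt F (F t * AL) t := hasDerivAt_exp_smul_const AL t
    have hH' : HasDerivAt H (ALᵀ * H t) t := hasDerivAt_exp_smul_const' ALᵀ t
    have := (hF'.mul_const Δ).mul hH'
    refine this.congr_deriv ?_
    rw [← hALΔ]
    noncomm_ring
  have hderivg : ∀ t, HasDerivAt g (ℓ (F t * (-(M * Mᵀ)) * H t)) t := fun t =>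
    (ℓ.hasFDerivAt.comp_hasDerivAt t (hderivG t)).congr_deriv (by rfl)
  have hval : ∀ t (W : Matrix (Fin n) (Fin n) ℝ), ℓ (F t * W * H t)
      = (H t *ᵥ v) ⬝ᵥ (W *ᵥ (H t *ᵥ v)) := by
    intro t W
    rw [hℓ, hFT t, quad_transpose]
  have hg' : ∀ t, HasDerivAt g (-((Mᵀ *ᵥ (H t *ᵥ v)) ⬝ᵥ (Mᵀ *ᵥ (H t *ᵥ v)))) t := by
    intro t
    have := hderivg t
    have h2 : ℓ (F t * (-(M * Mᵀ)) * H t) = -((Mᵀ *ᵥ (H t *ᵥ v)) ⬝ᵥ (Mᵀ *ᵥ (H t *ᵥ v))) := by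
      have h3 : F t * (-(M * Mᵀ)) * H t = -(F t * (M * Mᵀ) * H t) := by noncomm_ring
      rw [h3, map_neg, hval, ← Matrix.mulVec_mulVec, Matrix.dotProduct_mulVec,
        ← Matrix.mulVec_transpose]
    rwa [h2] at this
  -- limit of g at infinity
  have hu : Tendsto (fun t => H t *ᵥ v) atTop (𝓝 0) := by
    apply decayR
    intro μ hμ
    apply hHur
    rwa [show (ALᵀ).map Complex.ofReal = (AL.map Complex.ofReal)ᵀ from rfl,
      spectrum_transpose] at hμ
  have hq : Continuous fun x : Fin n → ℝ => x ⬝ᵥ (Δ *ᵥ x) := by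
    simp only [dotProduct, Matrix.mulVec, dotProduct]
    fun_prop
  have hglim : Tendsto g atTop (𝓝 0) := by
    have := (hq.tendsto 0).comp hu
    simp only [Matrix.mulVec_zero, Matrix.zero_mulVec, dotProduct_zero, zero_dotProduct] at this
    refine this.congr fun t => ?_
    exact (hval t Δ).symm
  have hg0 : g 0 = v ⬝ᵥ (Δ *ᵥ v) := by
    rw [hg, hF, hH]
    simp only [zero_smul, exp_zero, one_mul, mul_one]
    exact hℓ Δ
  constructor
  · -- g is antitone on [0, ∞): g t ≤ g 0, and g t → 0
    have hmono : ∀ t ≥ (0:ℝ), g t ≤ g 0 := by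
      intro t ht
      have hanti : Antitone g := by
        apply antitone_of_deriv_nonpos
        · exact fun t => (hg' t).differentiableAt
        · intro t
          rw [(hg' t).deriv]
          simp only [neg_nonpos]
          exact dotProduct_self_nonneg' _
      exact hanti ht
    rw [← hg0]
    exact le_of_tendsto hglim (eventually_atTop.2 ⟨0, hmono⟩)
  · intro hM
    have hconst : ∀ t, g t = g 0 := by
      intro t
      apply is_const_of_deriv_eq_zero
      · exact fun s => (hg' s).differentiableAt
      · intro s
        rw [(hg' s).deriv, hM]
        simp
    have : Tendsto (fun _ : ℝ => g 0) atTop (𝓝 0) := by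
      refine hglim.congr fun t => (hconst t)
    have h0 := tendsto_nhds_unique this tendsto_const_nhds
    rw [← hg0]
    exact h0.symm


/-- Optimality claim of Lemma 1: with `D_d D_dᵀ = I` and `Y ⪰ 0` solving the Riccati
equation, for any gain `L` making `A − LC` Hurwitz, the controllability Gramian `Q_L` of
`(A − LC, B_d − L D_d)` satisfies `trace(C Q_L Cᵀ) ≥ trace(C Y Cᵀ)`, with equality
when `L = L* = Y Cᵀ + B_d D_dᵀ`. -/
theorem h2_optimal_observer_gain {n m p : ℕ}
    (A : Matrix (Fin n) (Fin n) ℝ) (Bd : Matrix (Fin n) (Fin m) ℝ)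
    (C : Matrix (Fin p) (Fin n) ℝ) (Dd : Matrix (Fin p) (Fin m) ℝ)
    (Y : Matrix (Fin n) (Fin n) ℝ)
    (hDd : Dd * Ddᵀ = 1)
    (hY : Y.PosSemidef)
    (hRiccati : (A - Bd * Ddᵀ * C) * Y + Y * (A - Bd * Ddᵀ * C)ᵀ - Y * Cᵀ * C * Y
        + Bd * Bdᵀ - Bd * Ddᵀ * Dd * Bdᵀ = 0)
    (L : Matrix (Fin n) (Fin p) ℝ) (QL : Matrix (Fin n) (Fin n) ℝ)
    (hHur : ∀ μ ∈ spectrum ℂ ((A - L * C).map (Complex.ofReal)), μ.re < 0)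
    (hQL : (A - L * C) * QL + QL * (A - L * C)ᵀ
        + (Bd - L * Dd) * (Bd - L * Dd)ᵀ = 0) :
    (C * Y * Cᵀ).trace ≤ (C * QL * Cᵀ).trace ∧
      (L = Y * Cᵀ + Bd * Ddᵀ → (C * QL * Cᵀ).trace = (C * Y * Cᵀ).trace) := by
  classical
  have hYs : Yᵀ = Y := by
    have := hY.isHermitian
    rwa [Matrix.IsHermitian, Matrix.conjTranspose_eq_transpose_of_trivial] at this
  set AL : Matrix (Fin n) (Fin n) ℝ := A - L * C with hAL
  set Δ : Matrix (Fin n) (Fin n) ℝ := QL - Y with hΔ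
  set Md : Matrix (Fin n) (Fin p) ℝ := L - (Y * Cᵀ + Bd * Ddᵀ) with hMd
  have key : AL * Δ + Δ * ALᵀ + Md * Mdᵀ = 0 := by
    have expand : AL * Δ + Δ * ALᵀ + Md * Mdᵀ
        = ((A - L * C) * QL + QL * (A - L * C)ᵀ + (Bd - L * Dd) * (Bd - L * Dd)ᵀ)
          - ((A - Bd * Ddᵀ * C) * Y + Y * (A - Bd * Ddᵀ * C)ᵀ - Y * Cᵀ * C * Y
            + Bd * Bdᵀ - Bd * Ddᵀ * Dd * Bdᵀ)
          - L * (Dd * Ddᵀ) * Lᵀ + L * Lᵀ := by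
      rw [hAL, hΔ, hMd]
      simp only [Matrix.transpose_sub, Matrix.transpose_add, Matrix.transpose_mul,
        Matrix.transpose_transpose, hYs]
      simp only [Matrix.sub_mul, Matrix.mul_sub, Matrix.add_mul, Matrix.mul_add,
        Matrix.mul_assoc]
      noncomm_ring
    rw [expand, hQL, hRiccati, hDd]
    simp
  -- quadratic form of Δ with rows of C
  have hquad := fun (v : Fin n → ℝ) => lyap_quad AL Δ Md hHur key v
  have htrace : (C * Δ * Cᵀ).trace
      = ∑ i, (fun j => C i j) ⬝ᵥ (Δ *ᵥ (fun j => C i j)) := by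
    rw [Matrix.trace]
    refine Finset.sum_congr rfl fun i _ => ?_
    simp only [Matrix.diag_apply, Matrix.mul_apply, Matrix.transpose_apply, dotProduct,
      Matrix.mulVec, Finset.sum_mul, Finset.mul_sum]
    rw [Finset.sum_comm]
    exact Finset.sum_congr rfl fun j _ => Finset.sum_congr rfl fun k _ => by ring
  have htr2 : (C * QL * Cᵀ).trace = (C * Y * Cᵀ).trace + (C * Δ * Cᵀ).trace := by
    have : C * QL * Cᵀ = C * Y * Cᵀ + C * Δ * Cᵀ := by
      rw [hΔ]
      rw [Matrix.mul_sub, Matrix.sub_mul]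
      abel
    rw [this, Matrix.trace_add]
  constructor
  · have h0 : 0 ≤ (C * Δ * Cᵀ).trace := by
      rw [htrace]
      exact Finset.sum_nonneg fun i _ => (hquad _).1
    rw [htr2]
    linarith
  · intro hL
    have hM0 : Md = 0 := by rw [hMd, hL]; abel
    have h0 : (C * Δ * Cᵀ).trace = 0 := by
      rw [htrace]
      exact Finset.sum_eq_zero fun i _ => (hquad _).2 hM0
    rw [htr2, h0, add_zero]
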